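/- Let P ⊆ ℝ^D be a pointed polyhedron that is the intersection of n closed halfspaces in general position, and suppose P has exactly N vertices. Let ℓ be a linear functional that attains its minimum over P and takes distinct values at distinct vertices of P, let B ∈ ℝ, suppose every face of P on which ℓ < B holds pointwise is bounded, and suppose d = dim P^{ℓ<B} < D. Then for every i with 0 ≤ i ≤ d, the number of i-dimensional faces f of P with ℓ < B pointwise on f is at most N · C(d,i), where C(·,·) denotes the binomial coefficient. -/

import Mathlib

open Set Classical

/-- `f` is an (exposed) face of `P`: the empty set, `P` itself, or the set of maximizers
of a linear functional over `P`. -/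
def IsFace {V : Type*} [AddCommGroup V] [Module ℝ V] (P f : Set V) : Prop :=
  f = ∅ ∨ f = P ∨ ∃ l : V →ₗ[ℝ] ℝ, f = {x ∈ P | ∀ y ∈ P, l y ≤ l x}

/-- `v` is a vertex of `P`: the singleton `{v}` is a face of `P`. -/
def IsVertex {V : Type*} [AddCommGroup V] [Module ℝ V] (P : Set V) (v : V) : Prop :=
  IsFace P {v}

/-- Dimension of a face: `-1` for the empty face, otherwise the dimension of its
affine hull. -/
noncomputable def faceDim {V : Type*} [AddCommGroup V] [Module ℝ V] (f : Set V) : ℤ :=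
  if f = ∅ then -1 else (Module.finrank ℝ (affineSpan ℝ f).direction : ℤ)

set_option linter.unusedVariables false
set_option linter.unusedSectionVars false

namespace GPF

variable {D n : ℕ}

noncomputable def dotL (c : Fin D → ℝ) : (Fin D → ℝ) →ₗ[ℝ] ℝ :=
  ∑ j, c j • (LinearMap.proj j : (Fin D → ℝ) →ₗ[ℝ] ℝ)

@[simp] lemma dotL_apply (c x : Fin D → ℝ) : dotL c x = ∑ j, c j * x j := by
  simp [dotL]

lemma dotL_comm (c x : Fin D → ℝ) : dotL c x = dotL x c := by
  simp [mul_comm]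

lemma eq_zero_of_dotL_self (z : Fin D → ℝ) (h : dotL z z = 0) : z = 0 := by
  rw [dotL_apply] at h
  have h2 : ∀ j ∈ Finset.univ, z j * z j = 0 :=
    (Finset.sum_eq_zero_iff_of_nonneg (fun j _ => mul_self_nonneg (z j))).1 h
  funext j
  exact mul_self_eq_zero.1 (h2 j (Finset.mem_univ j))

lemma exists_perp (S : Set (Fin D → ℝ)) (h : Submodule.span ℝ S ≠ ⊤) :
    ∃ u : Fin D → ℝ, u ≠ 0 ∧ ∀ c ∈ S, dotL c u = 0 := by
  obtain ⟨φ, hφ0, hφ⟩ := Submodule.exists_dual_map_eq_bot_of_lt_top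
    (lt_top_iff_ne_top.2 h) inferInstance
  set u : Fin D → ℝ := fun j => φ (fun k => if j = k then 1 else 0) with hu
  have hexp : ∀ x, φ x = ∑ j, x j * u j := by
    intro x
    rw [LinearMap.pi_apply_eq_sum_univ φ x]
    simp [hu, smul_eq_mul]
  refine ⟨u, ?_, ?_⟩
  · intro h0
    apply hφ0
    apply LinearMap.ext
    intro x
    rw [hexp x, h0]
    simp
  · intro c hc
    have : φ c = 0 := by
      have hmem : φ c ∈ Submodule.map φ (Submodule.span ℝ S) :=
        Submodule.mem_map_of_mem (Submodule.subset_span hc)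
      rw [hφ] at hmem
      simpa using hmem
    rw [dotL_apply]
    rw [hexp c] at this
    exact this

lemma eq_of_dotL_span (S : Set (Fin D → ℝ)) (h : Submodule.span ℝ S = ⊤)
    (x y : Fin D → ℝ) (hxy : ∀ c ∈ S, dotL c x = dotL c y) : x = y := by
  have hz : ∀ c ∈ S, dotL (x - y) c = 0 := by
    intro c hc
    rw [← dotL_comm]
    have := hxy c hc
    simp only [map_sub]
    rw [this]; ring
  have hsub : S ⊆ (LinearMap.ker (dotL (x - y)) : Submodule ℝ (Fin D → ℝ)) := fun c hc => hz c hc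
  have : Submodule.span ℝ S ≤ LinearMap.ker (dotL (x - y)) := Submodule.span_le.2 hsub
  rw [h] at this
  have hzz : dotL (x - y) (x - y) = 0 := this (Submodule.mem_top)
  have := eq_zero_of_dotL_self _ hzz
  exact sub_eq_zero.1 this

variable {D n : ℕ}

/-- The subset of `P` where the constraints in `T` are tight. -/
def FT (a : Fin n → Fin D → ℝ) (b : Fin n → ℝ) (P : Set (Fin D → ℝ))
    (T : Finset (Fin n)) : Set (Fin D → ℝ) :=
  {x ∈ P | ∀ i ∈ T, ∑ j, a i j * x j = b i}

/-- The set of constraints active at `x`. -/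
noncomputable def activeF (a : Fin n → Fin D → ℝ) (b : Fin n → ℝ) (x : Fin D → ℝ) :
    Finset (Fin n) :=
  @Finset.filter _ (fun i => ∑ j, a i j * x j = b i) (fun _ => Classical.propDecidable _)
    Finset.univ

lemma mem_activeF {a : Fin n → Fin D → ℝ} {b : Fin n → ℝ} {x : Fin D → ℝ} {i : Fin n} :
    i ∈ activeF a b x ↔ ∑ j, a i j * x j = b i := by
  simp [activeF]

lemma mem_P {a : Fin n → Fin D → ℝ} {b : Fin n → ℝ} {P : Set (Fin D → ℝ)}
    (hP : P = ⋂ i, {x | ∑ j, a i j * x j ≤ b i}) {x : Fin D → ℝ} :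
    x ∈ P ↔ ∀ i, ∑ j, a i j * x j ≤ b i := by
  subst hP; simp

lemma dot_add_smul (c x w : Fin D → ℝ) (t : ℝ) :
    ∑ j, c j * (x + t • w) j = (∑ j, c j * x j) + t * ∑ j, c j * w j := by
  simp only [Pi.add_apply, Pi.smul_apply, smul_eq_mul, mul_add, Finset.sum_add_distrib,
    Finset.mul_sum]
  congr 1
  apply Finset.sum_congr rfl
  intro j _
  ring

lemma isClosed_P {a : Fin n → Fin D → ℝ} {b : Fin n → ℝ} {P : Set (Fin D → ℝ)}
    (hP : P = ⋂ i, {x | ∑ j, a i j * x j ≤ b i}) : IsClosed P := by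
  subst hP
  apply isClosed_iInter
  intro i
  have : {x : Fin D → ℝ | ∑ j, a i j * x j ≤ b i} = {x | dotL (a i) x ≤ b i} := by
    ext x; simp
  rw [this]
  exact isClosed_le (dotL (a i)).continuous_of_finiteDimensional continuous_const

lemma face_closed {a : Fin n → Fin D → ℝ} {b : Fin n → ℝ} {P : Set (Fin D → ℝ)}
    (hP : P = ⋂ i, {x | ∑ j, a i j * x j ≤ b i}) {f : Set (Fin D → ℝ)}
    (hf : IsFace P f) : IsClosed f := by
  rcases hf with h | h | ⟨l₀, h⟩
  · simp [h]
  · rw [h]; exact isClosed_P hP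
  · have : f = P ∩ ⋂ y ∈ P, {x | l₀ y ≤ l₀ x} := by
      rw [h]; ext x; simp [Set.mem_iInter]
    rw [this]
    refine (isClosed_P hP).inter (isClosed_biInter (fun y _ => ?_))
    exact isClosed_le continuous_const l₀.continuous_of_finiteDimensional

lemma FT_isFace {a : Fin n → Fin D → ℝ} {b : Fin n → ℝ} {P : Set (Fin D → ℝ)}
    (hP : P = ⋂ i, {x | ∑ j, a i j * x j ≤ b i}) (T : Finset (Fin n))
    (hne : (FT a b P T).Nonempty) : IsFace P (FT a b P T) := by
  obtain ⟨x₀, hx₀P, hx₀T⟩ := hne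
  refine Or.inr (Or.inr ⟨∑ i ∈ T, dotL (a i), ?_⟩)
  have hval : ∀ x : Fin D → ℝ, (∑ i ∈ T, dotL (a i)) x = ∑ i ∈ T, ∑ j, a i j * x j := by
    intro x; rw [LinearMap.sum_apply]; simp
  have hle : ∀ y ∈ P, (∑ i ∈ T, dotL (a i)) y ≤ ∑ i ∈ T, b i := by
    intro y hy
    rw [hval]
    exact Finset.sum_le_sum (fun i _ => (mem_P hP).1 hy i)
  have heq : ∀ y ∈ P, ((∑ i ∈ T, dotL (a i)) y = ∑ i ∈ T, b i ↔ ∀ i ∈ T, ∑ j, a i j * y j = b i) := by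
    intro y hy
    rw [hval]
    constructor
    · intro hsum i hi
      have h0 : ∑ i ∈ T, (b i - ∑ j, a i j * y j) = 0 := by
        rw [Finset.sum_sub_distrib, hsum, sub_self]
      have := (Finset.sum_eq_zero_iff_of_nonneg
        (fun i hi => sub_nonneg.2 ((mem_P hP).1 hy i))).1 h0 i hi
      linarith [this]
    · intro h
      exact Finset.sum_congr rfl h
  ext x
  constructor
  · rintro ⟨hxP, hxT⟩
    refine ⟨hxP, fun y hy => ?_⟩
    rw [(heq x hxP).2 hxT]
    exact hle y hy
  · rintro ⟨hxP, hmax⟩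
    refine ⟨hxP, (heq x hxP).1 ?_⟩
    have h1 := hmax x₀ hx₀P
    rw [(heq x₀ hx₀P).2 hx₀T] at h1
    exact le_antisymm (hle x hxP) h1

lemma slgen {a : Fin n → Fin D → ℝ} {b : Fin n → ℝ} {P : Set (Fin D → ℝ)}
    (hP : P = ⋂ i, {x | ∑ j, a i j * x j ≤ b i}) {x w : Fin D → ℝ} (hx : x ∈ P)
    (hw : ∀ i, (∑ j, a i j * x j = b i) → (∑ j, a i j * w j) ≤ 0) :
    ∃ ε : ℝ, 0 < ε ∧ ∀ t : ℝ, 0 ≤ t → t ≤ ε → x + t • w ∈ P := by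
  classical
  set g : Fin n → ℝ := fun i => ∑ j, a i j * w j with hg
  set εf : Fin n → ℝ := fun i => if 0 < g i then (b i - ∑ j, a i j * x j) / g i else 1 with hεf
  set F : Finset ℝ := insert 1 (Finset.univ.image εf) with hF
  have hFne : F.Nonempty := ⟨1, Finset.mem_insert_self _ _⟩
  have hpos : ∀ r ∈ F, 0 < r := by
    intro r hr
    rcases Finset.mem_insert.1 hr with h | h
    · rw [h]; norm_num
    · obtain ⟨i, _, rfl⟩ := Finset.mem_image.1 h
      by_cases hgi : 0 < g i
      · have hslack : 0 < b i - ∑ j, a i j * x j := by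
          rcases lt_or_eq_of_le ((mem_P hP).1 hx i) with h' | h'
          · linarith
          · exact absurd (hw i h') (not_le.2 hgi)
        simp only [hεf, if_pos hgi]
        exact div_pos hslack hgi
      · simp only [hεf, if_neg hgi]; norm_num
  refine ⟨F.min' hFne, hpos _ (F.min'_mem hFne), fun t ht0 htε => ?_⟩
  rw [mem_P hP]
  intro i
  rw [dot_add_smul]
  by_cases hgi : 0 < g i
  · have h1 : t ≤ εf i := le_trans htε (Finset.min'_le _ _
      (Finset.mem_insert_of_mem (Finset.mem_image_of_mem εf (Finset.mem_univ i))))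
    rw [hεf] at h1
    simp only [if_pos hgi] at h1
    have := (le_div_iff₀ hgi).1 h1
    have hgg : t * g i ≤ b i - ∑ j, a i j * x j := by
      calc t * g i ≤ ((b i - ∑ j, a i j * x j) / g i) * g i := by
            exact mul_le_mul_of_nonneg_right h1 (le_of_lt hgi)
        _ = b i - ∑ j, a i j * x j := div_mul_cancel₀ _ (ne_of_gt hgi)
    linarith
  · push_neg at hgi
    have : t * g i ≤ 0 := mul_nonpos_of_nonneg_of_nonpos ht0 hgi
    have := (mem_P hP).1 hx i
    linarith

lemma ray_mem {a : Fin n → Fin D → ℝ} {b : Fin n → ℝ} {P : Set (Fin D → ℝ)}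
    (hP : P = ⋂ i, {x | ∑ j, a i j * x j ≤ b i}) {x w : Fin D → ℝ} (hx : x ∈ P)
    (hw : ∀ i, (∑ j, a i j * w j) ≤ 0) :
    ∀ t : ℝ, 0 ≤ t → x + t • w ∈ P := by
  intro t ht
  rw [mem_P hP]
  intro i
  rw [dot_add_smul]
  have : t * (∑ j, a i j * w j) ≤ 0 := mul_nonpos_of_nonneg_of_nonpos ht (hw i)
  have := (mem_P hP).1 hx i
  linarith

/-- If the active constraints at a point of `P` span, that point is a vertex. -/
lemma vertex_of_span {a : Fin n → Fin D → ℝ} {b : Fin n → ℝ} {P : Set (Fin D → ℝ)}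
    (hP : P = ⋂ i, {x | ∑ j, a i j * x j ≤ b i}) {v : Fin D → ℝ} (hv : v ∈ P)
    (hspan : Submodule.span ℝ (a '' (activeF a b v : Set (Fin n))) = ⊤) :
    FT a b P (activeF a b v) = {v} ∧ IsVertex P v := by
  have hFT : FT a b P (activeF a b v) = {v} := by
    apply Subset.antisymm
    · rintro y ⟨hyP, hyT⟩
      have : y = v := by
        apply eq_of_dotL_span _ hspan
        rintro c ⟨i, hi, rfl⟩
        rw [dotL_apply, dotL_apply, hyT i hi, mem_activeF.1 hi]
      simp [this]
    · rintro y rfl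
      exact ⟨hv, fun i hi => mem_activeF.1 hi⟩
  refine ⟨hFT, ?_⟩
  have := FT_isFace hP (activeF a b v) ⟨v, hFT ▸ rfl⟩
  rwa [hFT] at this

/-- Every nonempty bounded face contains a vertex of `P` maximizing `l` on the face. -/
lemma vertex_max {a : Fin n → Fin D → ℝ} {b : Fin n → ℝ} {P : Set (Fin D → ℝ)}
    (hP : P = ⋂ i, {x | ∑ j, a i j * x j ≤ b i}) (l : (Fin D → ℝ) →ₗ[ℝ] ℝ)
    {f : Set (Fin D → ℝ)} (hf : IsFace P f) (hfne : f.Nonempty)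
    (hfb : Bornology.IsBounded f) :
    ∃ v ∈ f, IsVertex P v ∧ ∀ x ∈ f, l x ≤ l v := by
  -- get a functional description of f
  obtain ⟨l₀, hf0⟩ : ∃ l₀ : (Fin D → ℝ) →ₗ[ℝ] ℝ, f = {x ∈ P | ∀ y ∈ P, l₀ y ≤ l₀ x} := by
    rcases hf with h | h | ⟨l₀, h⟩
    · exact absurd h (Nonempty.ne_empty hfne)
    · exact ⟨0, by simp [h]⟩
    · exact ⟨l₀, h⟩
  have hfP : f ⊆ P := by rw [hf0]; exact fun x hx => hx.1
  have hcomp : IsCompact f := Metric.isCompact_of_isClosed_isBounded (face_closed hP hf) hfb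
  obtain ⟨x₀, hx₀f, hx₀max⟩ := hcomp.exists_isMaxOn hfne
    (l.continuous_of_finiteDimensional.continuousOn)
  set M : Set (Fin D → ℝ) := {x ∈ f | ∀ y ∈ f, l y ≤ l x} with hM
  have hx₀M : x₀ ∈ M := ⟨hx₀f, fun y hy => hx₀max hy⟩
  -- choose an element of M with maximal number of active constraints
  set cardId : Set ℕ := (fun x => (activeF a b x).card) '' M with hcardId
  have hcardne : cardId.Nonempty := ⟨_, ⟨x₀, hx₀M, rfl⟩⟩
  have hcardbdd : BddAbove cardId := by
    refine ⟨n, ?_⟩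
    rintro m ⟨x, _, rfl⟩
    simpa using Finset.card_le_univ (activeF a b x)
  obtain ⟨xs, hxsM, hxscard⟩ : ∃ xs ∈ M, (activeF a b xs).card = sSup cardId :=
    Nat.sSup_mem hcardne hcardbdd
  have hxsf : xs ∈ f := hxsM.1
  have hxsP : xs ∈ P := hfP hxsf
  -- claim: active constraints at xs span
  have hspan : Submodule.span ℝ (a '' (activeF a b xs : Set (Fin n))) = ⊤ := by
    by_contra hne
    obtain ⟨u, hu0, hu⟩ := exists_perp _ hne
    have huact : ∀ i, (∑ j, a i j * xs j = b i) → dotL (a i) u = 0 := by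
      intro i hi
      exact hu (a i) ⟨i, mem_activeF.2 hi, rfl⟩
    -- moving along ±u stays in P for small times
    have hslplus := slgen hP hxsP (w := u) (fun i hi => by rw [← dotL_apply]; rw [huact i hi])
    have hslminus := slgen hP hxsP (w := -u) (fun i hi => by
      have h0 : ∑ x, a i x * u x = 0 := by
        have := huact i hi
        rwa [dotL_apply] at this
      simp [mul_neg, Finset.sum_neg_distrib, h0])
    obtain ⟨ε₁, hε₁, hp⟩ := hslplus
    obtain ⟨ε₂, hε₂, hm⟩ := hslminus
    -- l₀ u = 0
    have hl₀ : l₀ u = 0 := by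
      have h1 : l₀ (xs + ε₁ • u) ≤ l₀ xs := by
        have hmem := hp ε₁ (le_of_lt hε₁) le_rfl
        exact (hf0 ▸ hxsf).2 _ hmem
      have h2 : l₀ (xs + ε₂ • (-u)) ≤ l₀ xs := by
        have hmem := hm ε₂ (le_of_lt hε₂) le_rfl
        exact (hf0 ▸ hxsf).2 _ hmem
      simp only [map_add, map_smul, map_neg, smul_eq_mul] at h1 h2
      nlinarith
    -- membership in f along the line
    have hfmem : ∀ t : ℝ, xs + t • u ∈ P → xs + t • u ∈ f := by
      intro t hmem
      rw [hf0]
      refine ⟨hmem, fun y hy => ?_⟩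
      have : l₀ (xs + t • u) = l₀ xs := by
        simp [map_add, map_smul, hl₀]
      rw [this]
      exact (hf0 ▸ hxsf).2 y hy
    -- l u = 0
    have hlu : l u = 0 := by
      have h1 : l (xs + ε₁ • u) ≤ l xs := hxsM.2 _ (hfmem _ (hp ε₁ (le_of_lt hε₁) le_rfl))
      have h2 : l (xs + (-ε₂) • u) ≤ l xs := by
        refine hxsM.2 _ (hfmem (-ε₂) ?_)
        have := hm ε₂ (le_of_lt hε₂) le_rfl
        rw [neg_smul, ← smul_neg]
        exact this
      simp only [map_add, map_smul, map_neg, smul_eq_mul] at h1 h2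
      nlinarith
    -- there must be a constraint increasing along u
    have hexJ : ∃ i, 0 < ∑ j, a i j * u j := by
      by_contra hJ
      push_neg at hJ
      have hray : ∀ t : ℝ, 0 ≤ t → xs + t • u ∈ f :=
        fun t ht => hfmem t (ray_mem hP hxsP hJ t ht)
      obtain ⟨r, hr⟩ := hfb.subset_closedBall 0
      have hu0' : 0 < ‖u‖ := norm_pos_iff.2 hu0
      set t : ℝ := (r + ‖xs‖ + 1) / ‖u‖ with htdef
      have ht0 : 0 ≤ t := by
        apply div_nonneg _ (le_of_lt hu0')
        have : 0 ≤ ‖xs‖ := norm_nonneg _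
        have hrr : 0 ≤ r := by
          have := hr (hray 0 le_rfl)
          simp at this
          exact le_trans (norm_nonneg _) (by simpa using this)
        linarith
      have hmem := hr (hray t ht0)
      rw [Metric.mem_closedBall, dist_zero_right] at hmem
      have hnorm : t * ‖u‖ - ‖xs‖ ≤ ‖xs + t • u‖ := by
        have h1 : ‖t • u‖ - ‖xs‖ ≤ ‖xs + t • u‖ := by
          have := norm_sub_le (xs + t • u) xs
          simp only [add_sub_cancel_left] at this
          linarith [this]
        rw [norm_smul] at h1
        rw [Real.norm_eq_abs, abs_of_nonneg ht0] at h1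
        exact h1
      have htu : t * ‖u‖ = r + ‖xs‖ + 1 := div_mul_cancel₀ _ (ne_of_gt hu0')
      rw [htu] at hnorm
      linarith
    -- travel to the first new active constraint
    classical
    set J : Finset (Fin n) := @Finset.filter _ (fun i => 0 < ∑ j, a i j * u j)
      (fun _ => Classical.propDecidable _) Finset.univ with hJdef
    have hJne : J.Nonempty := by
      obtain ⟨i, hi⟩ := hexJ
      exact ⟨i, by simp [hJdef, hi]⟩
    set εf : Fin n → ℝ := fun i => (b i - ∑ j, a i j * xs j) / (∑ j, a i j * u j) with hεf
    set ts : ℝ := J.inf' hJne εf with hts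
    have hmemJ : ∀ i ∈ J, 0 < ∑ j, a i j * u j := by
      intro i hi
      rw [hJdef] at hi
      simpa using (Finset.mem_filter.1 hi).2
    have hts0 : 0 ≤ ts := by
      apply Finset.le_inf'
      intro i hi
      apply div_nonneg _ (le_of_lt (hmemJ i hi))
      have := (mem_P hP).1 hxsP i
      linarith
    have hx'P : xs + ts • u ∈ P := by
      rw [mem_P hP]
      intro i
      rw [dot_add_smul]
      by_cases hgi : 0 < ∑ j, a i j * u j
      · have hiJ : i ∈ J := by simp [hJdef, hgi]
        have h1 : ts ≤ εf i := Finset.inf'_le _ hiJ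
        have : ts * (∑ j, a i j * u j) ≤ b i - ∑ j, a i j * xs j := by
          calc ts * (∑ j, a i j * u j) ≤ εf i * (∑ j, a i j * u j) :=
                mul_le_mul_of_nonneg_right h1 (le_of_lt hgi)
            _ = b i - ∑ j, a i j * xs j := div_mul_cancel₀ _ (ne_of_gt hgi)
        linarith
      · push_neg at hgi
        have h1 : ts * (∑ j, a i j * u j) ≤ 0 := mul_nonpos_of_nonneg_of_nonpos hts0 hgi
        have := (mem_P hP).1 hxsP i
        linarith
    have hx'f : xs + ts • u ∈ f := hfmem ts hx'P
    have hx'M : xs + ts • u ∈ M := by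
      refine ⟨hx'f, fun y hy => ?_⟩
      have : l (xs + ts • u) = l xs := by simp [map_add, map_smul, hlu]
      rw [this]
      exact hxsM.2 y hy
    -- the new point has strictly more active constraints
    obtain ⟨i₁, hi₁J, hi₁eq⟩ := Finset.exists_mem_eq_inf' hJne εf
    have hgi₁ : 0 < ∑ j, a i₁ j * u j := hmemJ i₁ hi₁J
    have hi₁new : ∑ j, a i₁ j * (xs + ts • u) j = b i₁ := by
      rw [dot_add_smul]
      have hts1 : ts = εf i₁ := hts.trans hi₁eq
      rw [hts1, hεf]
      simp only []
      rw [div_mul_cancel₀ _ (ne_of_gt hgi₁)]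
      ring
    have hsub : activeF a b xs ⊆ activeF a b (xs + ts • u) := by
      intro i hi
      have hact := mem_activeF.1 hi
      have hzero : ∑ j, a i j * u j = 0 := by
        have := huact i hact
        rwa [dotL_apply] at this
      rw [mem_activeF, dot_add_smul, hzero, hact]
      ring
    have hi₁old : i₁ ∉ activeF a b xs := by
      intro hmem
      have := huact i₁ (mem_activeF.1 hmem)
      rw [dotL_apply] at this
      linarith
    have hcardlt : (activeF a b xs).card < (activeF a b (xs + ts • u)).card := by
      apply Finset.card_lt_card
      rw [Finset.ssubset_iff_of_subset hsub]
      exact ⟨i₁, mem_activeF.2 hi₁new, hi₁old⟩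
    have hle : (activeF a b (xs + ts • u)).card ≤ sSup cardId :=
      le_csSup hcardbdd ⟨_, hx'M, rfl⟩
    omega
  obtain ⟨-, hvert⟩ := vertex_of_span hP hxsP hspan
  exact ⟨xs, hxsf, hvert, hxsM.2⟩

section Vertex

variable {a : Fin n → Fin D → ℝ} {b : Fin n → ℝ} {P : Set (Fin D → ℝ)} {v : Fin D → ℝ}

/-- construct the coordinate equivalence at a simple vertex -/
lemma exists_psi (hD : 0 < D) (hcard : (activeF a b v).card = D)
    (hind : LinearIndependent ℝ (fun i : ↥(activeF a b v) => a i)) :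
    ∃ Ψ : (Fin D → ℝ) ≃ₗ[ℝ] (↥(activeF a b v) → ℝ),
      ∀ x (i : ↥(activeF a b v)), Ψ x i = ∑ j, a i.1 j * x j := by
  have hcard' : Fintype.card ↥(activeF a b v) = Module.finrank ℝ (Fin D → ℝ) := by
    rw [Fintype.card_coe, hcard, Module.finrank_fin_fun]
  haveI : Nonempty ↥(activeF a b v) := by
    obtain ⟨i0, hi0⟩ := Finset.card_pos.1 (hcard ▸ hD)
    exact ⟨⟨i0, hi0⟩⟩
  have hspan : Submodule.span ℝ (Set.range (fun i : ↥(activeF a b v) => a i.1)) = ⊤ :=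
    LinearIndependent.span_eq_top_of_card_eq_finrank hind hcard'
  set Θ : (Fin D → ℝ) →ₗ[ℝ] (↥(activeF a b v) → ℝ) :=
    LinearMap.pi (fun i : ↥(activeF a b v) => dotL (a i.1)) with hΘ
  have hΘapp : ∀ x (i : ↥(activeF a b v)), Θ x i = ∑ j, a i.1 j * x j := by
    intro x i
    rw [hΘ, LinearMap.pi_apply, dotL_apply]
  have hinj : Function.Injective Θ := by
    rw [← LinearMap.ker_eq_bot, Submodule.eq_bot_iff]
    intro x hx
    have hx' : ∀ i : ↥(activeF a b v), dotL (a i.1) x = 0 := by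
      intro i
      have : Θ x i = 0 := by rw [LinearMap.mem_ker.1 hx]; rfl
      rwa [hΘ, LinearMap.pi_apply] at this
    apply eq_of_dotL_span _ hspan
    rintro c ⟨i, rfl⟩
    rw [hx' i]
    simp [dotL_apply]
  have hdim : Module.finrank ℝ (Fin D → ℝ) = Module.finrank ℝ (↥(activeF a b v) → ℝ) := by
    rw [Module.finrank_fin_fun, Module.finrank_pi, Fintype.card_coe, hcard]
  refine ⟨Θ.linearEquivOfInjective hinj hdim, fun x i => ?_⟩
  rw [LinearMap.linearEquivOfInjective_apply]
  exact hΘapp x i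

variable {Ψ : (Fin D → ℝ) ≃ₗ[ℝ] (↥(activeF a b v) → ℝ)}
  (hΨ : ∀ x (i : ↥(activeF a b v)), Ψ x i = ∑ j, a i.1 j * x j)

/-- the `i`-th edge-type direction at `v` (inward for all constraints except `i`) -/
noncomputable def wvec (Ψ : (Fin D → ℝ) ≃ₗ[ℝ] (↥(activeF a b v) → ℝ))
    (i : ↥(activeF a b v)) : Fin D → ℝ :=
  Ψ.symm (Pi.single i 1)

include hΨ in
lemma dot_wvec (i i' : ↥(activeF a b v)) :
    ∑ j, a i'.1 j * (wvec Ψ i) j = if i' = i then 1 else 0 := by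
  have := hΨ (wvec Ψ i) i'
  rw [wvec, LinearEquiv.apply_symm_apply] at this
  rw [wvec, ← this, Pi.single_apply]

include hΨ in
/-- fundamental expansion of a linear functional in vertex coordinates -/
lemma expand_lin (hvP : v ∈ P) (g : (Fin D → ℝ) →ₗ[ℝ] ℝ) (x : Fin D → ℝ) :
    g x = g v + ∑ i : ↥(activeF a b v),
      ((∑ j, a i.1 j * x j) - b i.1) * g (wvec Ψ i) := by
  have hcoord : Ψ (x - v) = fun i => (∑ j, a i.1 j * x j) - b i.1 := by
    funext i
    rw [hΨ (x - v) i]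
    have hvact : ∑ j, a i.1 j * v j = b i.1 := mem_activeF.1 i.2
    rw [← hvact, ← Finset.sum_sub_distrib]
    apply Finset.sum_congr rfl
    intro j _
    simp [Pi.sub_apply]
    ring
  set gg : (↥(activeF a b v) → ℝ) →ₗ[ℝ] ℝ := g.comp (Ψ.symm : _ →ₗ[ℝ] _) with hgg
  have h1 : g (x - v) = gg (Ψ (x - v)) := by
    rw [hgg, LinearMap.comp_apply, LinearEquiv.coe_coe, LinearEquiv.symm_apply_apply]
  have h2 := LinearMap.pi_apply_eq_sum_univ gg (Ψ (x - v))
  have h3 : ∀ i : ↥(activeF a b v),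
      gg (fun j => if i = j then (1:ℝ) else 0) = g (wvec Ψ i) := by
    intro i
    have : (fun j => if i = j then (1:ℝ) else 0) = Pi.single i 1 := by
      funext j
      rw [Pi.single_apply]
      by_cases h : i = j
      · simp [h]
      · simp [h, Ne.symm h]
    rw [this, hgg, LinearMap.comp_apply, LinearEquiv.coe_coe, wvec]
  have key : g x - g v = ∑ i : ↥(activeF a b v),
      Ψ (x - v) i • gg fun j => if i = j then (1:ℝ) else 0 := by
    rw [← map_sub, h1, h2]
  rw [← sub_eq_iff_eq_add', key]
  apply Finset.sum_congr rfl
  intro i _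
  rw [h3 i, hcoord]
  simp [smul_eq_mul]

omit hΨ in
omit hΨ in
lemma mem_FT_vertex (T : Finset (Fin n)) (hT : T ⊆ activeF a b v) (hvP : v ∈ P) :
    v ∈ FT a b P T :=
  ⟨hvP, fun i hi => mem_activeF.1 (hT hi)⟩

include hΨ in
lemma FT_ray (hP : P = ⋂ i, {x | ∑ j, a i j * x j ≤ b i}) (hvP : v ∈ P)
    (T : Finset (Fin n)) (hT : T ⊆ activeF a b v) (i : ↥(activeF a b v)) (hiT : i.1 ∉ T) :
    ∃ ε : ℝ, 0 < ε ∧ ∀ t : ℝ, 0 ≤ t → t ≤ ε → v + t • (-(wvec Ψ i)) ∈ FT a b P T := by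
  obtain ⟨ε, hε, hmem⟩ := slgen hP hvP (w := -(wvec Ψ i)) (fun i' hi' => by
    have hdot := dot_wvec hΨ i ⟨i', mem_activeF.2 hi'⟩
    have hflip : ∑ j, a i' j * (-(wvec Ψ i)) j = -(∑ j, a i' j * (wvec Ψ i) j) := by
      simp [mul_neg]
    rw [hflip, hdot]
    split <;> norm_num)
  refine ⟨ε, hε, fun t ht0 htε => ⟨hmem t ht0 htε, fun i' hi' => ?_⟩⟩
  have hi'act : i' ∈ activeF a b v := hT hi'
  have hne : (⟨i', hi'act⟩ : ↥(activeF a b v)) ≠ i := by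
    intro h
    apply hiT
    rw [← h] at hiT ⊢
    exact hi'
  have hdot := dot_wvec hΨ i ⟨i', hi'act⟩
  rw [if_neg hne] at hdot
  rw [dot_add_smul]
  have h1 : ∑ j, a i' j * (-(wvec Ψ i)) j = 0 := by
    rw [← neg_eq_zero, ← hdot]
    rw [← Finset.sum_neg_distrib]
    apply Finset.sum_congr rfl
    intro j _
    simp
  rw [h1, mem_activeF.1 hi'act]
  ring


include hΨ in
lemma FT_dim (hP : P = ⋂ i, {x | ∑ j, a i j * x j ≤ b i}) (hvP : v ∈ P)
    (hcard : (activeF a b v).card = D)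
    (T : Finset (Fin n)) (hT : T ⊆ activeF a b v) :
    faceDim (FT a b P T) = (D : ℤ) - T.card := by
  classical
  have hTD : T.card ≤ D := hcard ▸ Finset.card_le_card hT
  have hvFT : v ∈ FT a b P T := mem_FT_vertex T hT hvP
  have hne : FT a b P T ≠ ∅ := Set.nonempty_iff_ne_empty.1 ⟨v, hvFT⟩
  rw [faceDim, if_neg hne]
  have hιinj' : ∀ (x y : ↥T), (⟨x.1, hT x.2⟩ : ↥(activeF a b v)) = ⟨y.1, hT y.2⟩ → x = y := by
    intro x y h
    apply Subtype.ext
    exact congrArg (fun z : ↥(activeF a b v) => z.1) h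
  set ι : ↥T → ↥(activeF a b v) := fun i => ⟨i.1, hT i.2⟩ with hι
  have hιinj : Function.Injective ι := fun x y h => hιinj' x y h
  set ΘT : (Fin D → ℝ) →ₗ[ℝ] (↥T → ℝ) := LinearMap.pi (fun i : ↥T => dotL (a i.1)) with hΘT
  have hsurj : Function.Surjective ΘT := by
    have hcomp : ΘT = (LinearMap.funLeft ℝ ℝ ι).comp (Ψ : (Fin D → ℝ) →ₗ[ℝ] _) := by
      apply LinearMap.ext
      intro x
      funext i
      rw [hΘT, LinearMap.pi_apply, dotL_apply, LinearMap.comp_apply, LinearMap.funLeft_apply,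
        LinearEquiv.coe_coe, hΨ x (ι i)]
    rw [hcomp]
    exact (LinearMap.funLeft_surjective_of_injective ℝ ℝ ι hιinj).comp Ψ.surjective
  have hker : Module.finrank ℝ (LinearMap.ker ΘT) = D - T.card := by
    have hrn := LinearMap.finrank_range_add_finrank_ker ΘT
    rw [LinearMap.range_eq_top.2 hsurj, finrank_top] at hrn
    have h1 : Module.finrank ℝ (↥T → ℝ) = T.card := by
      rw [Module.finrank_pi, Fintype.card_coe]
    have h2 : Module.finrank ℝ (Fin D → ℝ) = D := Module.finrank_fin_fun ℝ
    omega
  set W : AffineSubspace ℝ (Fin D → ℝ) := AffineSubspace.mk' v (LinearMap.ker ΘT) with hW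
  have hsub : FT a b P T ⊆ W := by
    rintro x ⟨hxP, hxT⟩
    rw [AffineSubspace.mem_coe, hW, AffineSubspace.mem_mk', LinearMap.mem_ker]
    funext i
    have hv : ∑ j, a i.1 j * v j = b i.1 := mem_activeF.1 (hT i.2)
    have hx : ∑ j, a i.1 j * x j = b i.1 := hxT i.1 i.2
    have : (x -ᵥ v : Fin D → ℝ) = x - v := rfl
    rw [this, hΘT, LinearMap.pi_apply, map_sub, dotL_apply, dotL_apply, hv, hx]
    simp
  have hupper : Module.finrank ℝ (affineSpan ℝ (FT a b P T)).direction ≤ D - T.card := by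
    rw [← hker]
    apply Submodule.finrank_mono
    have h1 : affineSpan ℝ (FT a b P T) ≤ W := affineSpan_le.2 hsub
    have h2 := AffineSubspace.direction_le h1
    rwa [hW, AffineSubspace.direction_mk'] at h2
  -- lower bound
  set Rc : Finset ↥(activeF a b v) :=
    Finset.univ.filter (fun i : ↥(activeF a b v) => i.1 ∉ T) with hRc
  have hwmem : ∀ i : ↥(activeF a b v), i.1 ∉ T →
      wvec Ψ i ∈ (affineSpan ℝ (FT a b P T)).direction := by
    intro i hiT
    obtain ⟨ε, hε, hray⟩ := FT_ray hΨ hP hvP T hT i hiT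
    have hmem1 : v ∈ affineSpan ℝ (FT a b P T) := subset_affineSpan ℝ _ hvFT
    have hmem2 : v + ε • -(wvec Ψ i) ∈ affineSpan ℝ (FT a b P T) :=
      subset_affineSpan ℝ _ (hray ε (le_of_lt hε) le_rfl)
    have hd := AffineSubspace.vsub_mem_direction hmem1 hmem2
    have heq : (v -ᵥ (v + ε • -(wvec Ψ i)) : Fin D → ℝ) = ε • wvec Ψ i := by
      show v - (v + ε • -(wvec Ψ i)) = ε • wvec Ψ i
      rw [smul_neg]
      abel
    rw [heq] at hd
    have := Submodule.smul_mem (affineSpan ℝ (FT a b P T)).direction ε⁻¹ hd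
    rwa [inv_smul_smul₀ (ne_of_gt hε)] at this
  have hindep : LinearIndependent ℝ (fun i : ↥Rc => wvec Ψ i.1) := by
    have hb : LinearIndependent ℝ (fun i : ↥(activeF a b v) => wvec Ψ i) := by
      have := ((Pi.basisFun ℝ ↥(activeF a b v)).map Ψ.symm).linearIndependent
      convert this using 1
      funext i
      rw [wvec, Module.Basis.map_apply, Pi.basisFun_apply]
    exact hb.comp (fun i : ↥Rc => i.1) Subtype.val_injective
  have hspanle : Submodule.span ℝ (Set.range (fun i : ↥Rc => wvec Ψ i.1)) ≤
      (affineSpan ℝ (FT a b P T)).direction := by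
    rw [Submodule.span_le]
    rintro w ⟨i, rfl⟩
    exact hwmem i.1 (Finset.mem_filter.1 i.2).2
  have hRccard : Rc.card = D - T.card := by
    have himg : Finset.univ.filter (fun i : ↥(activeF a b v) => i.1 ∈ T) =
        Finset.image ι Finset.univ := by
      ext ⟨i, hi⟩
      simp only [Finset.mem_filter, Finset.mem_univ, true_and, Finset.mem_image]
      constructor
      · intro h
        exact ⟨⟨i, h⟩, rfl⟩
      · rintro ⟨j, -, rfl⟩
        exact j.2
    have hcardimg : (Finset.univ.filter (fun i : ↥(activeF a b v) => i.1 ∈ T)).card = T.card := by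
      rw [himg, Finset.card_image_of_injective _ hιinj, Finset.card_univ, Fintype.card_coe]
    have huniv : (Finset.univ : Finset ↥(activeF a b v)).card = D := by
      rw [Finset.card_univ, Fintype.card_coe, hcard]
    have h1 : Rc = Finset.univ \ Finset.univ.filter (fun i : ↥(activeF a b v) => i.1 ∈ T) := by
      rw [hRc, ← Finset.filter_not]
    rw [h1, Finset.card_sdiff_of_subset (Finset.filter_subset _ _), hcardimg, huniv]
  have hlower : D - T.card ≤ Module.finrank ℝ (affineSpan ℝ (FT a b P T)).direction := by
    have h1 : Module.finrank ℝ (Submodule.span ℝ (Set.range (fun i : ↥Rc => wvec Ψ i.1))) =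
        Fintype.card ↥Rc := finrank_span_eq_card hindep
    rw [Fintype.card_coe, hRccard] at h1
    rw [← h1]
    exact Submodule.finrank_mono hspanle
  have : Module.finrank ℝ (affineSpan ℝ (FT a b P T)).direction = D - T.card :=
    le_antisymm hupper hlower
  rw [this]
  omega

include hΨ in
lemma maxB (hP : P = ⋂ i, {x | ∑ j, a i j * x j ≤ b i}) (hvP : v ∈ P)
    (l : (Fin D → ℝ) →ₗ[ℝ] ℝ) (T : Finset (Fin n)) (hT : T ⊆ activeF a b v)
    (h : ∀ x ∈ FT a b P T, l x ≤ l v) :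
    ∀ i : ↥(activeF a b v), i.1 ∉ T → 0 ≤ l (wvec Ψ i) := by
  intro i hiT
  obtain ⟨ε, hε, hray⟩ := FT_ray hΨ hP hvP T hT i hiT
  have hx := h _ (hray ε (le_of_lt hε) le_rfl)
  have hval : l (v + ε • -(wvec Ψ i)) = l v - ε * l (wvec Ψ i) := by
    rw [map_add, map_smul, map_neg]
    simp only [smul_eq_mul]
    ring
  rw [hval] at hx
  nlinarith

include hΨ in
lemma maxA (hP : P = ⋂ i, {x | ∑ j, a i j * x j ≤ b i}) (hvP : v ∈ P)
    (l : (Fin D → ℝ) →ₗ[ℝ] ℝ) (T : Finset (Fin n)) (hT : T ⊆ activeF a b v)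
    (h : ∀ i : ↥(activeF a b v), i.1 ∉ T → 0 ≤ l (wvec Ψ i)) :
    ∀ x ∈ FT a b P T, l x ≤ l v := by
  rintro x ⟨hxP, hxT⟩
  rw [expand_lin hΨ hvP l x]
  have hsum : ∑ i : ↥(activeF a b v),
      ((∑ j, a i.1 j * x j) - b i.1) * l (wvec Ψ i) ≤ 0 := by
    apply Finset.sum_nonpos
    intro i _
    by_cases hi : i.1 ∈ T
    · rw [hxT i.1 hi]
      simp
    · have hc : (∑ j, a i.1 j * x j) - b i.1 ≤ 0 :=
        sub_nonpos.2 ((mem_P hP).1 hxP i.1)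
      have hν := h i hi
      nlinarith
  linarith


omit hΨ in
lemma face_subset {f : Set (Fin D → ℝ)} (hf : IsFace P f) : f ⊆ P := by
  rcases hf with h | h | ⟨l₁, h⟩
  · simp [h]
  · simp [h]
  · rw [h]; exact fun x hx => hx.1

omit hΨ in
lemma vertex_mem {v' : Fin D → ℝ} (hv : IsVertex P v') : v' ∈ P :=
  face_subset hv rfl

end Vertex

/-- constraints tight on all of `f` among those active at `v` -/
noncomputable def tightF (a : Fin n → Fin D → ℝ) (b : Fin n → ℝ)
    (f : Set (Fin D → ℝ)) (v : Fin D → ℝ) : Finset (Fin n) :=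
  @Finset.filter _ (fun i => ∀ x ∈ f, ∑ j, a i j * x j = b i)
    (fun _ => Classical.propDecidable _) (activeF a b v)

lemma mem_tightF {a : Fin n → Fin D → ℝ} {b : Fin n → ℝ} {f : Set (Fin D → ℝ)}
    {v : Fin D → ℝ} {i : Fin n} :
    i ∈ tightF a b f v ↔ i ∈ activeF a b v ∧ ∀ x ∈ f, ∑ j, a i j * x j = b i := by
  simp [tightF]

section Vertex2

variable {a : Fin n → Fin D → ℝ} {b : Fin n → ℝ} {P : Set (Fin D → ℝ)} {v : Fin D → ℝ}
  {Ψ : (Fin D → ℝ) ≃ₗ[ℝ] (↥(activeF a b v) → ℝ)}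
  (hΨ : ∀ x (i : ↥(activeF a b v)), Ψ x i = ∑ j, a i.1 j * x j)

include hΨ in
/-- every face through a simple vertex is obtained by making a subset of the active
constraints tight -/
lemma face_eq_FT (hP : P = ⋂ i, {x | ∑ j, a i j * x j ≤ b i}) (hvP : v ∈ P)
    {f : Set (Fin D → ℝ)} (hface : IsFace P f) (hvf : v ∈ f) :
    f = FT a b P (tightF a b f v) := by
  have hsub1 : f ⊆ FT a b P (tightF a b f v) := by
    intro x hx
    exact ⟨face_subset hface hx, fun i hi => (mem_tightF.1 hi).2 x hx⟩
  rcases hface with h | h | ⟨l₁, h⟩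
  · exact absurd (h ▸ hvf) (Set.notMem_empty v)
  · subst h
    exact Set.Subset.antisymm hsub1 (fun x hx => hx.1)
  · -- the maximizer case
    have hvmax : ∀ y ∈ P, l₁ y ≤ l₁ v := (h ▸ hvf).2
    have hν : ∀ i : ↥(activeF a b v), (i.1 ∉ (∅ : Finset (Fin n))) → 0 ≤ l₁ (wvec Ψ i) := by
      apply maxB hΨ hP hvP l₁ ∅ (Finset.empty_subset _)
      intro x hx
      exact hvmax x hx.1
    have hν' : ∀ i : ↥(activeF a b v), 0 ≤ l₁ (wvec Ψ i) :=
      fun i => hν i (Finset.notMem_empty _)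
    classical
    set Spos : Finset (Fin n) :=
      Finset.image Subtype.val (Finset.univ.filter
        (fun i : ↥(activeF a b v) => 0 < l₁ (wvec Ψ i))) with hSpos
    have hSsub : Spos ⊆ activeF a b v := by
      intro i hi
      obtain ⟨i', _, rfl⟩ := Finset.mem_image.1 hi
      exact i'.2
    have hmemSpos : ∀ i : ↥(activeF a b v), (i.1 ∈ Spos ↔ 0 < l₁ (wvec Ψ i)) := by
      intro i
      rw [hSpos]
      simp only [Finset.mem_image, Finset.mem_filter, Finset.mem_univ, true_and]
      constructor
      · rintro ⟨i', hpos, hval⟩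
        have : i' = i := Subtype.ext hval
        rwa [this] at hpos
      · intro hpos
        exact ⟨i, hpos, rfl⟩
    -- f = FT Spos
    have hfS : f = FT a b P Spos := by
      apply Set.Subset.antisymm
      · rintro x hx
        have hxP : x ∈ P := (h ▸ hx).1
        have hxmax : l₁ x = l₁ v := le_antisymm (hvmax x hxP) ((h ▸ hx).2 v hvP)
        have hexp := expand_lin hΨ hvP l₁ x
        have hzero : ∑ i : ↥(activeF a b v),
            ((∑ j, a i.1 j * x j) - b i.1) * l₁ (wvec Ψ i) = 0 := by
          linarith [hexp, hxmax]
        have hterms : ∀ i ∈ (Finset.univ : Finset ↥(activeF a b v)),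
            -(((∑ j, a i.1 j * x j) - b i.1) * l₁ (wvec Ψ i)) = 0 := by
          have hnn : ∀ i ∈ (Finset.univ : Finset ↥(activeF a b v)),
              0 ≤ -(((∑ j, a i.1 j * x j) - b i.1) * l₁ (wvec Ψ i)) := by
            intro i _
            have hc : (∑ j, a i.1 j * x j) - b i.1 ≤ 0 :=
              sub_nonpos.2 ((mem_P hP).1 hxP i.1)
            nlinarith [hν' i]
          apply (Finset.sum_eq_zero_iff_of_nonneg hnn).1
          rw [Finset.sum_neg_distrib, hzero, neg_zero]
        refine ⟨hxP, fun i hi => ?_⟩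
        have hiA : i ∈ activeF a b v := hSsub hi
        have hpos : 0 < l₁ (wvec Ψ ⟨i, hiA⟩) := (hmemSpos ⟨i, hiA⟩).1 hi
        have := hterms ⟨i, hiA⟩ (Finset.mem_univ _)
        have hc0 : (∑ j, a i j * x j) - b i = 0 := by
          by_contra hne
          have hc : (∑ j, a i j * x j) - b i < 0 :=
            lt_of_le_of_ne (sub_nonpos.2 ((mem_P hP).1 hxP i)) hne
          nlinarith [this]
        linarith [hc0]
      · rintro x ⟨hxP, hxS⟩
        have hexp := expand_lin hΨ hvP l₁ x
        have hzero : ∑ i : ↥(activeF a b v),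
            ((∑ j, a i.1 j * x j) - b i.1) * l₁ (wvec Ψ i) = 0 := by
          apply Finset.sum_eq_zero
          intro i _
          by_cases hpos : 0 < l₁ (wvec Ψ i)
          · have : i.1 ∈ Spos := (hmemSpos i).2 hpos
            rw [hxS i.1 this]
            simp
          · have : l₁ (wvec Ψ i) = 0 := le_antisymm (not_lt.1 hpos) (hν' i)
            rw [this, mul_zero]
        have hxmax : l₁ x = l₁ v := by rw [hexp, hzero, add_zero]
        rw [h]
        exact ⟨hxP, fun y hy => hxmax ▸ hvmax y hy⟩
    -- conclude
    have hStight : Spos ⊆ tightF a b f v := by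
      intro i hi
      rw [mem_tightF]
      refine ⟨hSsub hi, fun x hx => ?_⟩
      have := (hfS ▸ hx).2 i hi
      exact this
    apply Set.Subset.antisymm hsub1
    intro x hx
    rw [hfS]
    exact ⟨hx.1, fun i hi => hx.2 i (hStight hi)⟩

include hΨ in
/-- if `v` maximizes `l` on a face through `v`, it maximizes `l` on every down edge -/
lemma edge_max (hP : P = ⋂ i, {x | ∑ j, a i j * x j ≤ b i}) (hvP : v ∈ P)
    (l : (Fin D → ℝ) →ₗ[ℝ] ℝ) (T : Finset (Fin n)) (hT : T ⊆ activeF a b v)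
    (h : ∀ x ∈ FT a b P T, l x ≤ l v) {j : Fin n} (hjA : j ∈ activeF a b v) (hjT : j ∉ T) :
    ∀ x ∈ FT a b P ((activeF a b v).erase j), l x ≤ l v := by
  have hν := maxB hΨ hP hvP l T hT h
  apply maxA hΨ hP hvP l ((activeF a b v).erase j) (Finset.erase_subset _ _)
  intro i hi
  have : i.1 = j := by
    have hiA : i.1 ∈ activeF a b v := i.2
    by_contra hne
    exact hi (Finset.mem_erase.2 ⟨hne, hiA⟩)
  apply hν
  rw [this]
  exact hjT

end Vertex2


/-- the set of "down" directions at `v`: active constraints whose relaxation edge is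
maximized at `v`. -/
noncomputable def DnF (a : Fin n → Fin D → ℝ) (b : Fin n → ℝ) (P : Set (Fin D → ℝ))
    (l : (Fin D → ℝ) →ₗ[ℝ] ℝ) (v : Fin D → ℝ) : Finset (Fin n) :=
  @Finset.filter _ (fun j => ∀ x ∈ FT a b P ((activeF a b v).erase j), l x ≤ l v)
    (fun _ => Classical.propDecidable _) (activeF a b v)

lemma mem_DnF {a : Fin n → Fin D → ℝ} {b : Fin n → ℝ} {P : Set (Fin D → ℝ)}
    {l : (Fin D → ℝ) →ₗ[ℝ] ℝ} {v : Fin D → ℝ} {j : Fin n} :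
    j ∈ DnF a b P l v ↔ j ∈ activeF a b v ∧
      ∀ x ∈ FT a b P ((activeF a b v).erase j), l x ≤ l v := by
  simp [DnF]

end GPF

theorem general_pos_faces (D n : ℕ)
    (a : Fin n → Fin D → ℝ) (b : Fin n → ℝ) (ha : ∀ i, a i ≠ 0)
    (P : Set (Fin D → ℝ)) (hP : P = ⋂ i, {x | ∑ j, a i j * x j ≤ b i})
    (hpointed : ∃ v, IsVertex P v)
    (hgenpos : ∀ v, IsVertex P v →
      {i : Fin n | ∑ j, a i j * v j = b i}.ncard = D ∧
      LinearIndependent ℝ (fun i : {i : Fin n // ∑ j, a i j * v j = b i} => a i))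
    (N : ℕ) (hNfin : {v | IsVertex P v}.Finite) (hN : {v | IsVertex P v}.ncard = N)
    (l : (Fin D → ℝ) →ₗ[ℝ] ℝ)
    (hmin : ∃ m ∈ P, ∀ x ∈ P, l m ≤ l x)
    (hinj : ∀ u v, IsVertex P u → IsVertex P v → l u = l v → u = v)
    (B : ℝ)
    (hbdd : ∀ f, IsFace P f → (∀ x ∈ f, l x < B) → Bornology.IsBounded f)
    (d : ℕ) (hdD : d < D)
    (hdim_le : ∀ f, IsFace P f → (∀ x ∈ f, l x < B) → faceDim f ≤ (d : ℤ))
    (hdim_ex : ∃ f, IsFace P f ∧ (∀ x ∈ f, l x < B) ∧ faceDim f = (d : ℤ)) :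
    ∀ i : ℕ, i ≤ d →
      {f : Set (Fin D → ℝ) | IsFace P f ∧ (∀ x ∈ f, l x < B) ∧ faceDim f = (i : ℤ)}.Finite ∧
      {f : Set (Fin D → ℝ) | IsFace P f ∧ (∀ x ∈ f, l x < B) ∧ faceDim f = (i : ℤ)}.ncard ≤
        N * d.choose i := by
  classical
  intro i hid
  have hD0 : 0 < D := lt_of_le_of_lt (Nat.zero_le d) hdD
  set S : Set (Set (Fin D → ℝ)) :=
    {f | IsFace P f ∧ (∀ x ∈ f, l x < B) ∧ faceDim f = (i : ℤ)} with hSdef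
  -- per-vertex coordinate data
  have hvdata : ∀ v, IsVertex P v → ∃ Ψ : (Fin D → ℝ) ≃ₗ[ℝ] (↥(GPF.activeF a b v) → ℝ),
      (∀ x (i' : ↥(GPF.activeF a b v)), Ψ x i' = ∑ j, a i'.1 j * x j) ∧
      (GPF.activeF a b v).card = D := by
    intro v hv
    obtain ⟨hcard0, hind0⟩ := hgenpos v hv
    have hseteq : {i' : Fin n | ∑ j, a i' j * v j = b i'} = ↑(GPF.activeF a b v) := by
      ext i'
      simp [GPF.mem_activeF]
    have hcard : (GPF.activeF a b v).card = D := by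
      rw [← Set.ncard_coe_finset, ← hseteq, hcard0]
    have hind : LinearIndependent ℝ (fun i' : ↥(GPF.activeF a b v) => a i'.1) := by
      have h := hind0.comp
        (fun i' : ↥(GPF.activeF a b v) =>
          (⟨i'.1, GPF.mem_activeF.1 i'.2⟩ : {i' : Fin n // ∑ j, a i' j * v j = b i'}))
        (fun x y hxy => Subtype.ext (by exact congrArg (fun z : {i' : Fin n // ∑ j, a i' j * v j = b i'} => z.1) hxy))
      have heq : (fun i' : ↥(GPF.activeF a b v) => a i'.1) =
          (fun i' : {i' : Fin n // ∑ j, a i' j * v j = b i'} => a i'.1) ∘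
          (fun i' : ↥(GPF.activeF a b v) =>
            (⟨i'.1, GPF.mem_activeF.1 i'.2⟩ : {i' : Fin n // ∑ j, a i' j * v j = b i'})) := by
        funext i'
        rfl
      rw [heq]
      exact h
    obtain ⟨Ψ, hΨ⟩ := GPF.exists_psi hD0 hcard hind
    exact ⟨Ψ, hΨ, hcard⟩
  -- the down set at any vertex below B has at most d elements
  have hDnbound : ∀ v, IsVertex P v → l v < B → (GPF.DnF a b P l v).card ≤ d := by
    intro v hv hlvB
    obtain ⟨Ψ, hΨ, hcard⟩ := hvdata v hv
    have hvP : v ∈ P := GPF.vertex_mem hv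
    set Dn := GPF.DnF a b P l v with hDn
    have hDnsub : Dn ⊆ GPF.activeF a b v := Finset.filter_subset _ _
    set T : Finset (Fin n) := GPF.activeF a b v \ Dn with hT
    have hTsub : T ⊆ GPF.activeF a b v := Finset.sdiff_subset
    have hGmax : ∀ x ∈ GPF.FT a b P T, l x ≤ l v := by
      apply GPF.maxA hΨ hP hvP l T hTsub
      intro i' hi'
      have hi'Dn : i'.1 ∈ Dn := by
        have hi'A : i'.1 ∈ GPF.activeF a b v := i'.2
        by_contra hnot
        exact hi' (Finset.mem_sdiff.2 ⟨hi'A, hnot⟩)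
      have hedge : ∀ x ∈ GPF.FT a b P ((GPF.activeF a b v).erase i'.1), l x ≤ l v :=
        (GPF.mem_DnF.1 hi'Dn).2
      have := GPF.maxB hΨ hP hvP l ((GPF.activeF a b v).erase i'.1)
        (Finset.erase_subset _ _) hedge
      exact this i' (Finset.notMem_erase _ _)
    have hGB : ∀ x ∈ GPF.FT a b P T, l x < B := fun x hx => lt_of_le_of_lt (hGmax x hx) hlvB
    have hGface : IsFace P (GPF.FT a b P T) :=
      GPF.FT_isFace hP T ⟨v, GPF.mem_FT_vertex T hTsub hvP⟩
    have hle := hdim_le _ hGface hGB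
    rw [GPF.FT_dim hΨ hP hvP hcard T hTsub] at hle
    have hTcard : T.card = D - Dn.card := by
      rw [hT, Finset.card_sdiff_of_subset hDnsub, hcard]
    have hDnD : Dn.card ≤ D := hcard ▸ Finset.card_le_card hDnsub
    omega
  -- assign to each face a vertex and a down-subset
  have key : ∀ f ∈ S, ∃ (v : Fin D → ℝ) (R : Finset (Fin n)),
      IsVertex P v ∧ l v < B ∧ R ⊆ GPF.DnF a b P l v ∧ R.card = i ∧
      f = GPF.FT a b P (GPF.activeF a b v \ R) := by
    rintro f ⟨hface, hfB, hfdim⟩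
    have hfne : f.Nonempty := by
      rw [Set.nonempty_iff_ne_empty]
      intro hfe
      rw [faceDim, if_pos hfe] at hfdim
      omega
    obtain ⟨v, hvf, hvert, hvmax⟩ := GPF.vertex_max hP l hface hfne (hbdd f hface hfB)
    obtain ⟨Ψ, hΨ, hcard⟩ := hvdata v hvert
    have hvP : v ∈ P := GPF.vertex_mem hvert
    have hfFT := GPF.face_eq_FT hΨ hP hvP hface hvf
    set Tf := GPF.tightF a b f v with hTfdef
    have hTsub : Tf ⊆ GPF.activeF a b v := Finset.filter_subset _ _
    have hdimf := GPF.FT_dim hΨ hP hvP hcard Tf hTsub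
    rw [← hfFT, hfdim] at hdimf
    have hTfD : Tf.card ≤ D := hcard ▸ Finset.card_le_card hTsub
    set R := GPF.activeF a b v \ Tf with hRdef
    have hRcard : R.card = i := by
      rw [hRdef, Finset.card_sdiff_of_subset hTsub, hcard]
      omega
    have hfeq : f = GPF.FT a b P (GPF.activeF a b v \ R) := by
      rw [hRdef, Finset.sdiff_sdiff_eq_self hTsub]
      exact hfFT
    have hRDn : R ⊆ GPF.DnF a b P l v := by
      intro j hj
      obtain ⟨hjA, hjT⟩ := Finset.mem_sdiff.1 hj
      rw [GPF.mem_DnF]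
      refine ⟨hjA, ?_⟩
      apply GPF.edge_max hΨ hP hvP l Tf hTsub ?_ hjA hjT
      intro x hx
      rw [← hfFT] at hx
      exact hvmax x hx
    exact ⟨v, R, hvert, hfB v hvf, hRDn, hRcard, hfeq⟩
  choose! Φ Rf hΦvert hΦB hΦDn hΦcard hΦeq using key
  have hinjOn : Set.InjOn (fun f => (Φ f, Rf f)) S := by
    intro f1 h1 f2 h2 heq
    have hfst : Φ f1 = Φ f2 := (Prod.ext_iff.1 heq).1
    have hsnd : Rf f1 = Rf f2 := (Prod.ext_iff.1 heq).2
    rw [hΦeq f1 h1, hΦeq f2 h2, hfst, hsnd]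
  set Vfin := hNfin.toFinset.filter (fun v => l v < B) with hVfin
  set tgt : Finset ((Fin D → ℝ) × Finset (Fin n)) :=
    Vfin.biUnion (fun v => ((GPF.DnF a b P l v).powersetCard i).image (fun R => (v, R)))
    with htgt
  have himg : (fun f => (Φ f, Rf f)) '' S ⊆ ↑tgt := by
    rintro p ⟨f, hf, rfl⟩
    rw [Finset.mem_coe, htgt, Finset.mem_biUnion]
    refine ⟨Φ f, ?_, ?_⟩
    · rw [hVfin, Finset.mem_filter]
      exact ⟨hNfin.mem_toFinset.2 (hΦvert f hf), hΦB f hf⟩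
    · exact Finset.mem_image.2 ⟨Rf f,
        Finset.mem_powersetCard.2 ⟨hΦDn f hf, hΦcard f hf⟩, rfl⟩
  have hfin : S.Finite :=
    Set.Finite.of_finite_image (Set.Finite.subset tgt.finite_toSet himg) hinjOn
  refine ⟨hfin, ?_⟩
  have h1 : S.ncard = ((fun f => (Φ f, Rf f)) '' S).ncard :=
    (Set.ncard_image_of_injOn hinjOn).symm
  have h2 : ((fun f => (Φ f, Rf f)) '' S).ncard ≤ tgt.card := by
    rw [← Set.ncard_coe_finset]
    exact Set.ncard_le_ncard himg tgt.finite_toSet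
  have h3 : tgt.card ≤ ∑ v ∈ Vfin, d.choose i := by
    rw [htgt]
    refine le_trans Finset.card_biUnion_le (Finset.sum_le_sum ?_)
    intro v hv
    refine le_trans Finset.card_image_le ?_
    rw [Finset.card_powersetCard]
    apply Nat.choose_le_choose
    obtain ⟨hv1, hv2⟩ := Finset.mem_filter.1 (hVfin ▸ hv)
    exact hDnbound v (hNfin.mem_toFinset.1 hv1) hv2
  have h4 : ∑ v ∈ Vfin, d.choose i = Vfin.card * d.choose i := by
    rw [Finset.sum_const, smul_eq_mul]
  have h5 : Vfin.card ≤ N := by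
    rw [hVfin]
    calc (hNfin.toFinset.filter (fun v => l v < B)).card
        ≤ hNfin.toFinset.card := Finset.card_filter_le _ _
      _ = N := by rw [← Set.ncard_eq_toFinset_card _ hNfin, hN]
  calc S.ncard = ((fun f => (Φ f, Rf f)) '' S).ncard := h1
    _ ≤ tgt.card := h2
    _ ≤ ∑ v ∈ Vfin, d.choose i := h3
    _ = Vfin.card * d.choose i := h4
    _ ≤ N * d.choose i := Nat.mul_le_mul_right _ h5
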